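/- Let p₁ = (1+ε)/√n and p₂ = 1/√n with ε ∈ (0,1) and n ≥ 4. Then the squared Hellinger distance between the distributions D(p₁) and D(p₂) satisfies H²(D(p₁), D(p₂)) = n·(√((1−p₁)/n) − √((1−p₂)/n))² + (√p₁ − √p₂)² ≤ C·ε²/√n for an absolute constant C. -/

import Mathlib

set_option maxHeartbeats 800000


/-- The distribution `D(p)` on `{0, v₁, …, vₙ}` (encoded as `Option (Fin n)`):
probability `p` on the origin (`none`) and `(1-p)/n` on each `vᵢ` (`some i`). -/
noncomputable def Dp (n : ℕ) (p : ℝ) : Option (Fin n) → ℝ :=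
  fun x => match x with
    | none => p
    | some _ => (1 - p) / n

lemma key13 (a b : ℝ) (hb : 0 ≤ b) (hab : b ≤ a) (ha : 0 < a) :
    (Real.sqrt a - Real.sqrt b) ^ 2 ≤ (a - b) ^ 2 / a := by
  have hsa := Real.sqrt_nonneg a
  have hsb := Real.sqrt_nonneg b
  have h1 : Real.sqrt b ≤ Real.sqrt a := Real.sqrt_le_sqrt hab
  have ha2 : Real.sqrt a ^ 2 = a := Real.sq_sqrt ha.le
  have hb2 : Real.sqrt b ^ 2 = b := Real.sq_sqrt hb
  have hsapos : 0 < Real.sqrt a := Real.sqrt_pos.mpr ha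
  have h3 : Real.sqrt a - Real.sqrt b ≤ (a - b) / Real.sqrt a := by
    rw [le_div_iff₀ hsapos]
    nlinarith
  calc (Real.sqrt a - Real.sqrt b) ^ 2 ≤ ((a - b) / Real.sqrt a) ^ 2 := by
        apply pow_le_pow_left₀ (by linarith) h3
    _ = (a - b) ^ 2 / a := by rw [div_pow, ha2]

theorem stmt13 : ∃ C : ℝ, 0 < C ∧
    ∀ n : ℕ, 4 ≤ n → ∀ ε : ℝ, 0 < ε → ε < 1 →
    ∀ p₁ p₂ : ℝ, p₁ = (1 + ε) / Real.sqrt n → p₂ = 1 / Real.sqrt n →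
    (∑ x : Option (Fin n), (Real.sqrt (Dp n p₁ x) - Real.sqrt (Dp n p₂ x)) ^ 2)
      = n * (Real.sqrt ((1 - p₁) / n) - Real.sqrt ((1 - p₂) / n)) ^ 2
        + (Real.sqrt p₁ - Real.sqrt p₂) ^ 2 ∧
    (∑ x : Option (Fin n), (Real.sqrt (Dp n p₁ x) - Real.sqrt (Dp n p₂ x)) ^ 2)
      ≤ C * ε ^ 2 / Real.sqrt n := by
  refine ⟨3, by norm_num, ?_⟩
  intro n hn ε hε hε1 p₁ p₂ hp₁ hp₂
  have hn4 : (4:ℝ) ≤ n := by exact_mod_cast hn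
  have hn0 : (0:ℝ) < n := by linarith
  set s := Real.sqrt n with hs
  have hss : s ^ 2 = n := Real.sq_sqrt hn0.le
  have hs2 : 2 ≤ s := by
    have h4 : Real.sqrt 4 ≤ s := Real.sqrt_le_sqrt hn4
    have : Real.sqrt 4 = 2 := by
      rw [show (4:ℝ) = 2 ^ 2 by norm_num, Real.sqrt_sq (by norm_num)]
    linarith
  have hs0 : 0 < s := by linarith
  have hsn : s ≤ n := by nlinarith
  -- basic facts about p₁, p₂
  have hp21 : p₂ ≤ p₁ := by rw [hp₁, hp₂]; gcongr; linarith
  have hp20 : 0 < p₂ := by rw [hp₂]; positivity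
  have hp11 : p₁ ≤ 1 := by
    rw [hp₁, div_le_one hs0]; linarith
  have hp2half : p₂ ≤ 1 / 2 := by
    rw [hp₂]
    rw [div_le_div_iff₀ hs0 (by norm_num)]
    linarith
  have hdiff : p₁ - p₂ = ε / s := by rw [hp₁, hp₂]; field_simp; ring
  -- the equality
  have heq : (∑ x : Option (Fin n), (Real.sqrt (Dp n p₁ x) - Real.sqrt (Dp n p₂ x)) ^ 2)
      = n * (Real.sqrt ((1 - p₁) / n) - Real.sqrt ((1 - p₂) / n)) ^ 2
        + (Real.sqrt p₁ - Real.sqrt p₂) ^ 2 := by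
    rw [Fintype.sum_option]
    simp [Dp, Finset.sum_const, Finset.card_univ, nsmul_eq_mul]
    ring
  refine ⟨heq, ?_⟩
  rw [heq]
  -- bound the second term
  have hb2 : (Real.sqrt p₁ - Real.sqrt p₂) ^ 2 ≤ ε ^ 2 / s := by
    have h := key13 p₁ p₂ hp20.le hp21 (lt_of_lt_of_le hp20 hp21)
    have hrhs : (p₁ - p₂) ^ 2 / p₁ ≤ ε ^ 2 / s := by
      rw [hdiff, hp₁]
      have he : (ε / s) ^ 2 / ((1 + ε) / s) = ε ^ 2 / (s * (1 + ε)) := by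
        field_simp
      rw [he, div_le_div_iff₀ (by positivity) hs0]
      have hx : 0 ≤ ε ^ 2 * s * ε := by positivity
      nlinarith [hx]
    linarith
  -- bound the first term
  have hb1 : (n:ℝ) * (Real.sqrt ((1 - p₁) / n) - Real.sqrt ((1 - p₂) / n)) ^ 2 ≤ 2 * ε ^ 2 / s := by
    have hsym : (Real.sqrt ((1 - p₁) / n) - Real.sqrt ((1 - p₂) / n)) ^ 2
        = (Real.sqrt ((1 - p₂) / n) - Real.sqrt ((1 - p₁) / n)) ^ 2 := by ring
    have ha0 : (0:ℝ) < (1 - p₂) / n := by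
      apply div_pos (by linarith) hn0
    have h := key13 ((1 - p₂) / n) ((1 - p₁) / n)
      (by apply div_nonneg (by linarith) hn0.le) (by gcongr <;> linarith) ha0
    rw [hsym]
    have hdd : (1 - p₂) / n - (1 - p₁) / n = (p₁ - p₂) / n := by ring
    rw [hdd, hdiff] at h
    have hchain : (n:ℝ) * ((ε / s / n) ^ 2 / ((1 - p₂) / n)) ≤ 2 * ε ^ 2 / s := by
      have h2 : (1:ℝ)/2 ≤ 1 - p₂ := by linarith
      have he : (n:ℝ) * ((ε / s / n) ^ 2 / ((1 - p₂) / n)) = ε ^ 2 / (s ^ 2 * (1 - p₂)) := by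
        field_simp
      rw [he, div_le_div_iff₀ (by nlinarith) hs0]
      nlinarith [sq_nonneg ε, sq_nonneg (ε * s)]
    calc (n:ℝ) * (Real.sqrt ((1 - p₂) / n) - Real.sqrt ((1 - p₁) / n)) ^ 2
        ≤ n * ((ε / s / n) ^ 2 / ((1 - p₂) / n)) := by
          apply mul_le_mul_of_nonneg_left h hn0.le
      _ ≤ 2 * ε ^ 2 / s := hchain
  have : (3:ℝ) * ε ^ 2 / s = 2 * ε ^ 2 / s + ε ^ 2 / s := by ring
  rw [this]
  linarith
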